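/- For every α ∈ (0, 1/4) and every ε > 0 there exists n₀ such that for all n ≥ n₀, every pair of integers (m_A, m_B) satisfying m_A + m_B ≥ (1 + h(2α) + ε)·n, m_A ≥ (h(2α) + ε)·n, and m_B ≥ (h(2α) + ε)·n is achievable for the deterministic combinatorial Slepian–Wolf scheme with parameters (n, ⌊αn⌋); moreover, achievability can be witnessed by a pair of encodings both of which are 𝔽₂-linear. -/

import Mathlib

/-- The binary entropy function `h(α) = −α·log₂ α − (1−α)·log₂(1−α)`. -/
noncomputable def binEnt (a : ℝ) : ℝ :=
  -a * Real.logb 2 a - (1 - a) * Real.logb 2 (1 - a)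

/-- A pair of encodings is uniquely decodable for the combinatorial Slepian–Wolf
scheme with parameters `(n, T)`. -/
def UniquelyDecodable {n mA mB : ℕ} (T : ℕ)
    (CodeA : (Fin n → Bool) → (Fin mA → Bool))
    (CodeB : (Fin n → Bool) → (Fin mB → Bool)) : Prop :=
  ∀ x y x' y' : Fin n → Bool,
    hammingDist x y ≤ T → hammingDist x' y' ≤ T →
    CodeA x = CodeA x' → CodeB y = CodeB y' → (x, y) = (x', y')

/-- Identification of `{0,1}` with the field `𝔽₂`. -/
def toF2 {n : ℕ} (x : Fin n → Bool) : Fin n → ZMod 2 := fun i => if x i then 1 else 0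

/-- An encoding map is linear if, under the identification of `{0,1}` with `𝔽₂`,
it is given by an `𝔽₂`-linear map `𝔽₂ⁿ → 𝔽₂^m`. -/
def IsLinearEncoding {n m : ℕ} (C : (Fin n → Bool) → (Fin m → Bool)) : Prop :=
  ∃ f : (Fin n → ZMod 2) →ₗ[ZMod 2] (Fin m → ZMod 2),
    ∀ x, toF2 (C x) = f (toF2 x)

/-! ### Auxiliary material -/

open Finset

section Aux

lemma zmod2_add_self : ∀ a : ZMod 2, a + a = 0 := by decide

lemma zmod2_one_add_one : (1 : ZMod 2) + 1 = 0 := by decide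

lemma zmod2_eq_of_add_eq_zero : ∀ a b : ZMod 2, a + b = 0 → a = b := by decide

lemma vec_add_self {m : ℕ} (v : Fin m → ZMod 2) : v + v = 0 :=
  funext fun i => zmod2_add_self (v i)

/-- Greedy (Gilbert–Varshamov style) construction of a linear map all of whose
nonzero values avoid a small set `S`. -/
lemma gv_aux (n : ℕ) (S : Finset (Fin n → ZMod 2)) (hS : 0 < S.card) :
    ∀ d : ℕ, 2 ^ d * S.card ≤ 2 ^ n →
    ∃ ι : (Fin d → ZMod 2) →ₗ[ZMod 2] (Fin n → ZMod 2), ∀ w, ι w ∈ S → w = 0 := by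
  intro d
  induction d with
  | zero =>
    intro _
    exact ⟨0, fun w _ => Subsingleton.elim w 0⟩
  | succ d ih =>
    intro hle
    obtain ⟨ι, hι⟩ := ih (le_trans (by gcongr <;> simp) hle)
    set bad : Finset (Fin n → ZMod 2) :=
      (univ ×ˢ S).image (fun p : (Fin d → ZMod 2) × (Fin n → ZMod 2) => p.2 + ι p.1) with hbad
    have hcard : bad.card < 2 ^ n := by
      calc bad.card ≤ (univ ×ˢ S).card := Finset.card_image_le
        _ = 2 ^ d * S.card := by
            rw [Finset.card_product]
            congr 1
            simp [Fintype.card_fun]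
        _ < 2 ^ (d+1) * S.card :=
            Nat.mul_lt_mul_of_lt_of_le (Nat.pow_lt_pow_succ (by norm_num)) le_rfl hS
        _ ≤ 2 ^ n := hle
    have : ∃ x : Fin n → ZMod 2, x ∉ bad := by
      by_contra h
      push_neg at h
      have : (univ : Finset (Fin n → ZMod 2)).card ≤ bad.card :=
        Finset.card_le_card (fun x _ => h x)
      simp [Fintype.card_fun] at this
      omega
    obtain ⟨x, hx⟩ := this
    have hxS : ∀ w : Fin d → ZMod 2, x + ι w ∉ S := by
      intro w hw
      apply hx
      rw [hbad]
      apply Finset.mem_image.2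
      refine ⟨(w, x + ι w), by simpa using hw, ?_⟩
      simp only
      rw [add_assoc, vec_add_self, add_zero]
    refine ⟨(ι.comp (LinearMap.funLeft (ZMod 2) (ZMod 2) Fin.castSucc)) +
      (LinearMap.proj (Fin.last d)).smulRight x, ?_⟩
    intro w hw
    simp only [LinearMap.add_apply, LinearMap.comp_apply, LinearMap.funLeft_apply,
      LinearMap.smulRight_apply, LinearMap.proj_apply] at hw
    rcases (by decide : ∀ a : ZMod 2, a = 0 ∨ a = 1) (w (Fin.last d)) with h0 | h1
    · rw [h0, zero_smul, add_zero] at hw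
      have hinit : (fun i => w (Fin.castSucc i)) = 0 := hι _ hw
      funext j
      rcases Fin.eq_castSucc_or_eq_last j with ⟨i, rfl⟩ | rfl
      · exact congrFun hinit i
      · exact h0
    · exfalso
      rw [h1, one_smul, add_comm] at hw
      exact hxS _ hw

lemma sum_prod_zmod (f : ZMod 2 → ℝ) :
    ∀ n : ℕ, ∑ v : Fin n → ZMod 2, ∏ i, f (v i) = (f 0 + f 1) ^ n := by
  intro n
  induction n with
  | zero => simp
  | succ n ih =>
    rw [← (Fin.consEquiv (fun _ : Fin (n+1) => ZMod 2)).sum_comp, Fintype.sum_prod_type]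
    have key : ∀ (a : ZMod 2) (v : Fin n → ZMod 2),
        (∏ i, f (((Fin.consEquiv (fun _ : Fin (n+1) => ZMod 2)) (a, v)) i)) = f a * ∏ i, f (v i) := by
      intro a v
      rw [Fin.prod_univ_succ]
      simp [Fin.consEquiv, Fin.cons_zero, Fin.cons_succ]
    simp_rw [key]
    have h2 : ∑ a : ZMod 2, f a = f 0 + f 1 := by
      show ∑ a : Fin 2, f a = f 0 + f 1
      exact Fin.sum_univ_two (fun a : Fin 2 => f a)
    simp_rw [← Finset.mul_sum, ih, ← Finset.sum_mul, h2, pow_succ]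
    ring

lemma prod_ite_wt (n : ℕ) (p : ℝ) (v : Fin n → ZMod 2) :
    (∏ i, (if v i = 0 then (1-p) else p)) = p ^ hammingNorm v * (1-p) ^ (n - hammingNorm v) := by
  rw [Finset.prod_ite, Finset.prod_const, Finset.prod_const]
  have hnorm : (univ.filter fun i => ¬ v i = 0).card = hammingNorm v := by
    rfl
  have hc : (univ.filter fun i => v i = 0).card + (univ.filter fun i => ¬ v i = 0).card
      = n := by
    rw [Finset.card_filter_add_card_filter_not]
    simp
  rw [hnorm, mul_comm]
  congr 1
  congr 1
  omega

lemma card_ball_mul_le_one (n k : ℕ) (hkn : k ≤ n) (p : ℝ) (hp0 : 0 < p) (hp : p ≤ 1/2) :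
    ((univ.filter fun v : Fin n → ZMod 2 => hammingNorm v ≤ k).card : ℝ)
      * (p ^ k * (1-p) ^ (n-k)) ≤ 1 := by
  set q := 1 - p with hq
  have hq0 : 0 < q := by rw [hq]; linarith
  have hpq : p ≤ q := by rw [hq]; linarith
  have step1 : ∀ i : ℕ, i ≤ k → p ^ k * q ^ (n-k) ≤ p ^ i * q ^ (n-i) := by
    intro i hi
    have e1 : p ^ k = p ^ i * p ^ (k-i) := by rw [← pow_add]; congr 1; omega
    have e2 : q ^ (n-i) = q ^ (k-i) * q ^ (n-k) := by rw [← pow_add]; congr 1; omega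
    have e3 : p ^ (k-i) ≤ q ^ (k-i) := pow_le_pow_left₀ hp0.le hpq _
    rw [e1, e2]
    have h4 : (0:ℝ) ≤ p ^ i := by positivity
    have h5 : (0:ℝ) ≤ q ^ (n-k) := by positivity
    calc p ^ i * p ^ (k-i) * q ^ (n-k) ≤ p ^ i * q ^ (k-i) * q ^ (n-k) := by
          apply mul_le_mul_of_nonneg_right _ h5
          exact mul_le_mul_of_nonneg_left e3 h4
      _ = p ^ i * (q ^ (k-i) * q ^ (n-k)) := by ring
  set S := univ.filter fun v : Fin n → ZMod 2 => hammingNorm v ≤ k with hS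
  calc (S.card : ℝ) * (p ^ k * q ^ (n-k))
      = ∑ _v ∈ S, p ^ k * q ^ (n-k) := by rw [Finset.sum_const, nsmul_eq_mul]
    _ ≤ ∑ v ∈ S, p ^ hammingNorm v * q ^ (n - hammingNorm v) := by
        apply Finset.sum_le_sum
        intro v hv
        exact step1 _ (Finset.mem_filter.1 hv).2
    _ ≤ ∑ v : Fin n → ZMod 2, p ^ hammingNorm v * q ^ (n - hammingNorm v) := by
        apply Finset.sum_le_sum_of_subset_of_nonneg (Finset.subset_univ S)
        intro v _ _
        positivity
    _ = ∑ v : Fin n → ZMod 2, ∏ i, (if v i = 0 then q else p) := by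
        apply Finset.sum_congr rfl
        intro v _
        rw [prod_ite_wt]
    _ = ((if (0 : ZMod 2) = 0 then q else p) + (if (1 : ZMod 2) = 0 then q else p)) ^ n :=
        sum_prod_zmod (fun a => if a = 0 then q else p) n
    _ = 1 := by
        rw [if_pos rfl, if_neg (by decide)]
        rw [hq]
        norm_num

/-- Extend a vector by zeros. -/
def padOut (r m : ℕ) (h : r ≤ m) : (Fin r → ZMod 2) →ₗ[ZMod 2] (Fin m → ZMod 2) where
  toFun v := fun j => if hj : (j : ℕ) < r then v ⟨j, hj⟩ else 0
  map_add' u v := by funext j; by_cases hj : (j : ℕ) < r <;> simp [hj]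
  map_smul' c v := by funext j; by_cases hj : (j : ℕ) < r <;> simp [hj]

lemma padOut_inj (r m : ℕ) (h : r ≤ m) : Function.Injective (padOut r m h) := by
  intro u v huv
  funext i
  have := congrFun huv ⟨(i : ℕ), lt_of_lt_of_le i.isLt h⟩
  simpa [padOut, i.isLt] using this

def embFst (a b : ℕ) : (Fin a → ZMod 2) →ₗ[ZMod 2] (Fin (a + b) → ZMod 2) :=
  padOut a (a + b) (Nat.le_add_right a b)

def embSnd (a b : ℕ) : (Fin b → ZMod 2) →ₗ[ZMod 2] (Fin (a + b) → ZMod 2) where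
  toFun v := fun j => if hj : (j : ℕ) < a then 0 else v ⟨(j : ℕ) - a, by have := j.isLt; omega⟩
  map_add' u v := by funext j; by_cases hj : (j : ℕ) < a <;> simp [hj]
  map_smul' c v := by funext j; by_cases hj : (j : ℕ) < a <;> simp [hj]

lemma embFst_inj (a b : ℕ) : Function.Injective (embFst a b) :=
  padOut_inj a (a + b) (Nat.le_add_right a b)

lemma embSnd_inj (a b : ℕ) : Function.Injective (embSnd a b) := by
  intro u v huv
  funext i
  have hi : a + (i : ℕ) < a + b := by have := i.isLt; omega
  have := congrFun huv ⟨a + (i : ℕ), hi⟩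
  simp [embSnd] at this
  exact this

lemma emb_add_eq_zero {a b : ℕ} {u : Fin a → ZMod 2} {v : Fin b → ZMod 2}
    (h : embFst a b u + embSnd a b v = 0) : u = 0 ∧ v = 0 := by
  constructor
  · funext i
    have hi : (i : ℕ) < a + b := lt_of_lt_of_le i.isLt (Nat.le_add_right a b)
    have := congrFun h ⟨(i : ℕ), hi⟩
    simpa [embFst, embSnd, padOut, i.isLt] using this
  · funext i
    have hi : a + (i : ℕ) < a + b := by have := i.isLt; omega
    have := congrFun h ⟨a + (i : ℕ), hi⟩
    simp [embFst, embSnd, padOut] at this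
    exact this

lemma toF2_inj {n : ℕ} : Function.Injective (toF2 (n := n)) := by
  intro x y hxy
  funext i
  have := congrFun hxy i
  cases hx : x i <;> cases hy : y i <;> simp_all [toF2]

def ofF2 {m : ℕ} (v : Fin m → ZMod 2) : Fin m → Bool := fun i => decide (v i = 1)

lemma toF2_ofF2 {m : ℕ} (v : Fin m → ZMod 2) : toF2 (ofF2 v) = v := by
  funext i
  rcases (by decide : ∀ a : ZMod 2, a = 0 ∨ a = 1) (v i) with h | h <;>
    simp [toF2, ofF2, h]

lemma hammingNorm_toF2_add {n : ℕ} (x y : Fin n → Bool) :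
    hammingNorm (toF2 x + toF2 y) = hammingDist x y := by
  unfold hammingDist hammingNorm
  congr 1
  apply Finset.filter_congr
  intro i _
  cases hx : x i <;> cases hy : y i <;>
    simp [toF2, hx, hy, Pi.add_apply, zmod2_one_add_one]

lemma hammingNorm_add_le {n : ℕ} (s t : Fin n → ZMod 2) :
    hammingNorm (s + t) ≤ hammingNorm s + hammingNorm t := by
  have h3 : hammingDist (s + t) s = hammingNorm t := by
    rw [hammingDist_eq_hammingNorm, neg_add_rev, neg_add_cancel_right]
    congr 1
    funext i
    exact zmod2_eq_of_add_eq_zero _ _ (neg_add_cancel (t i))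
  have h2 := hammingDist_triangle (s + t) s (0 : Fin n → ZMod 2)
  rw [hammingDist_zero_right, hammingDist_zero_right, h3] at h2
  omega

/-- Build a linear "syndrome" map to `𝔽₂^m` whose kernel is contained in a
subspace `K` of large enough rank. -/
lemma quot_code (n m : ℕ) (K : Submodule (ZMod 2) (Fin n → ZMod 2))
    (hK : n - m ≤ Module.finrank (ZMod 2) K) :
    ∃ f : (Fin n → ZMod 2) →ₗ[ZMod 2] (Fin m → ZMod 2), ∀ u, f u = 0 → u ∈ K := by
  have hq := Submodule.finrank_quotient_add_finrank K
  have htot : Module.finrank (ZMod 2) (Fin n → ZMod 2) = n := by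
    simp [Module.finrank_pi]
  rw [htot] at hq
  set r := Module.finrank (ZMod 2) ((Fin n → ZMod 2) ⧸ K) with hr
  have hrm : r ≤ m := by omega
  let b := Module.finBasis (ZMod 2) ((Fin n → ZMod 2) ⧸ K)
  refine ⟨(padOut r m hrm).comp ((b.equivFun.toLinearMap).comp K.mkQ), ?_⟩
  intro u hu
  simp only [LinearMap.comp_apply] at hu
  have h1 : b.equivFun (K.mkQ u) = 0 := by
    apply padOut_inj r m hrm
    rw [map_zero]
    exact hu
  have h2 : K.mkQ u = 0 := by
    apply b.equivFun.injective
    rw [h1, map_zero]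
  rwa [Submodule.mkQ_apply, Submodule.Quotient.mk_eq_zero] at h2

/-- The main construction: from a counting bound, produce uniquely decodable
linear encodings. -/
lemma construct (n mA mB T : ℕ)
    (hcount : 2 ^ ((n - mA) + (n - mB)) *
      ((univ.filter fun v : Fin n → ZMod 2 => hammingNorm v ≤ 2*T).card) ≤ 2 ^ n) :
    ∃ (CodeA : (Fin n → Bool) → (Fin mA → Bool))
      (CodeB : (Fin n → Bool) → (Fin mB → Bool)),
      UniquelyDecodable T CodeA CodeB ∧ IsLinearEncoding CodeA ∧ IsLinearEncoding CodeB := by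
  classical
  set S := univ.filter fun v : Fin n → ZMod 2 => hammingNorm v ≤ 2*T with hSdef
  have h0S : (0 : Fin n → ZMod 2) ∈ S := by
    rw [hSdef]
    exact Finset.mem_filter.2 ⟨Finset.mem_univ _, by simp⟩
  have hSpos : 0 < S.card := Finset.card_pos.2 ⟨0, h0S⟩
  set dA := n - mA with hdA
  set dB := n - mB with hdB
  obtain ⟨ι, hι⟩ := gv_aux n S hSpos (dA + dB) hcount
  have hιinj : Function.Injective ι := by
    rw [← LinearMap.ker_eq_bot]
    apply (Submodule.eq_bot_iff _).2
    intro w hw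
    exact hι w ((LinearMap.mem_ker.1 hw).symm ▸ h0S)
  -- the two kernels
  set KA := LinearMap.range (ι.comp (embFst dA dB)) with hKA
  set KB := LinearMap.range (ι.comp (embSnd dA dB)) with hKB
  have hinjA : Function.Injective ⇑(ι ∘ₗ embFst dA dB) := by
    rw [LinearMap.coe_comp]
    exact hιinj.comp (embFst_inj dA dB)
  have hinjB : Function.Injective ⇑(ι ∘ₗ embSnd dA dB) := by
    rw [LinearMap.coe_comp]
    exact hιinj.comp (embSnd_inj dA dB)
  have hrankA : Module.finrank (ZMod 2) KA = dA := by
    rw [hKA, LinearMap.finrank_range_of_inj hinjA]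
    simp [Module.finrank_pi]
  have hrankB : Module.finrank (ZMod 2) KB = dB := by
    rw [hKB, LinearMap.finrank_range_of_inj hinjB]
    simp [Module.finrank_pi]
  obtain ⟨fA, hfA⟩ := quot_code n mA KA (by omega)
  obtain ⟨fB, hfB⟩ := quot_code n mB KB (by omega)
  refine ⟨fun x => ofF2 (fA (toF2 x)), fun y => ofF2 (fB (toF2 y)), ?_, ⟨fA, fun x => toF2_ofF2 _⟩,
    ⟨fB, fun y => toF2_ofF2 _⟩⟩
  intro x y x' y' hxy hx'y' hA hB
  have hAeq : fA (toF2 x) = fA (toF2 x') := by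
    have := congrArg toF2 hA
    rwa [toF2_ofF2, toF2_ofF2] at this
  have hBeq : fB (toF2 y) = fB (toF2 y') := by
    have := congrArg toF2 hB
    rwa [toF2_ofF2, toF2_ofF2] at this
  set u := toF2 x + toF2 x' with hu
  set v := toF2 y + toF2 y' with hv
  have huK : u ∈ KA := by
    apply hfA
    rw [hu, map_add, hAeq, vec_add_self]
  have hvK : v ∈ KB := by
    apply hfB
    rw [hv, map_add, hBeq, vec_add_self]
  obtain ⟨a, ha⟩ := huK
  obtain ⟨b, hb⟩ := hvK
  simp only [LinearMap.comp_apply] at ha hb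
  have hwt : hammingNorm (u + v) ≤ 2 * T := by
    have hrearr : u + v = (toF2 x + toF2 y) + (toF2 x' + toF2 y') := by
      rw [hu, hv]; abel
    rw [hrearr]
    calc hammingNorm ((toF2 x + toF2 y) + (toF2 x' + toF2 y'))
        ≤ hammingNorm (toF2 x + toF2 y) + hammingNorm (toF2 x' + toF2 y') :=
          hammingNorm_add_le _ _
      _ = hammingDist x y + hammingDist x' y' := by
          rw [hammingNorm_toF2_add, hammingNorm_toF2_add]
      _ ≤ 2 * T := by omega
  have hmemS : ι (embFst dA dB a + embSnd dA dB b) ∈ S := by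
    rw [map_add, ha, hb]
    exact Finset.mem_filter.2 ⟨Finset.mem_univ _, hwt⟩
  have hab0 := hι _ hmemS
  obtain ⟨ha0, hb0⟩ := emb_add_eq_zero hab0
  have hu0 : u = 0 := by rw [← ha, ha0, map_zero, map_zero]
  have hv0 : v = 0 := by rw [← hb, hb0, map_zero, map_zero]
  have hx : x = x' := by
    apply toF2_inj
    funext i
    exact zmod2_eq_of_add_eq_zero _ _ (congrFun hu0 i)
  have hy : y = y' := by
    apply toF2_inj
    funext i
    exact zmod2_eq_of_add_eq_zero _ _ (congrFun hv0 i)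
  rw [hx, hy]

end Aux

set_option maxHeartbeats 1000000 in
theorem stmt6 (α : ℝ) (hα0 : 0 < α) (hα1 : α < 1 / 4) (ε : ℝ) (hε : 0 < ε) :
    ∃ n₀ : ℕ, ∀ n : ℕ, n₀ ≤ n → ∀ mA mB : ℕ,
      (mA : ℝ) + mB ≥ (1 + binEnt (2 * α) + ε) * n →
      (mA : ℝ) ≥ (binEnt (2 * α) + ε) * n →
      (mB : ℝ) ≥ (binEnt (2 * α) + ε) * n →
      ∃ (CodeA : (Fin n → Bool) → (Fin mA → Bool))
        (CodeB : (Fin n → Bool) → (Fin mB → Bool)),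
        UniquelyDecodable ⌊α * n⌋₊ CodeA CodeB ∧
        IsLinearEncoding CodeA ∧ IsLinearEncoding CodeB := by
  classical
  set p : ℝ := 2 * α with hp
  have hp0 : 0 < p := by positivity
  have hp12 : p < 1/2 := by rw [hp]; linarith
  set q : ℝ := 1 - p with hq
  have hq0 : 0 < q := by rw [hq]; linarith
  have hq1 : q < 1 := by rw [hq]; linarith
  set L1 : ℝ := - Real.logb 2 p with hL1
  set L2 : ℝ := - Real.logb 2 q with hL2
  have hL1pos : 0 < L1 := by
    rw [hL1, neg_pos]
    exact Real.logb_neg (by norm_num) hp0 (by linarith)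
  have hL2pos : 0 < L2 := by
    rw [hL2, neg_pos]
    exact Real.logb_neg (by norm_num) hq0 hq1
  have hEnt : binEnt p = p * L1 + q * L2 := by
    rw [binEnt, hL1, hL2, hq]
    ring
  refine ⟨max 1 ⌈(2 * L2) / ε⌉₊, fun n hn mA mB hsum hA hB => ?_⟩
  have hn1 : 1 ≤ n := le_trans (le_max_left _ _) hn
  have hnR : (1:ℝ) ≤ n := by exact_mod_cast hn1
  have hn0R : (0:ℝ) < n := by linarith
  have hεn : 2 * L2 ≤ ε * n := by
    have h1 : ⌈(2 * L2) / ε⌉₊ ≤ n := le_trans (le_max_right _ _) hn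
    have h2 : (2 * L2) / ε ≤ n := le_trans (Nat.le_ceil _) (by exact_mod_cast h1)
    rw [div_le_iff₀ hε] at h2
    linarith
  set T := ⌊α * (n:ℝ)⌋₊ with hT
  set k := 2 * T with hk
  have hkle : (k : ℝ) ≤ p * n := by
    rw [hk, hp]
    push_cast
    have := Nat.floor_le (by positivity : (0:ℝ) ≤ α * n)
    linarith
  have hkge : p * n - 2 ≤ (k : ℝ) := by
    rw [hk, hp]
    push_cast
    have := Nat.lt_floor_add_one (α * (n:ℝ))
    linarith
  have hkn : k ≤ n := by
    have : (k:ℝ) ≤ (n:ℝ) := by nlinarith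
    exact_mod_cast this
  set S := univ.filter fun v : Fin n → ZMod 2 => hammingNorm v ≤ k with hSdef
  -- bound on the cardinality of the Hamming ball
  have hvol := card_ball_mul_le_one n k hkn p hp0 (le_of_lt hp12)
  have hpk_pos : (0:ℝ) < p ^ k * q ^ (n - k) := by positivity
  have hcard : (S.card : ℝ) ≤ (p ^ k * q ^ (n-k))⁻¹ := by
    rw [← one_div, le_div_iff₀ hpk_pos]
    exact hvol
  have hinv : (p ^ k * q ^ (n-k))⁻¹ ≤ (2:ℝ) ^ ((binEnt p + ε) * n) := by
    have hpe : p ^ k = (2:ℝ) ^ (Real.logb 2 p * (k:ℝ)) := by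
      rw [Real.rpow_mul (by norm_num : (0:ℝ) ≤ 2), Real.rpow_logb (by norm_num) (by norm_num) hp0,
        Real.rpow_natCast]
    have hqe : q ^ (n-k) = (2:ℝ) ^ (Real.logb 2 q * ((n-k : ℕ) : ℝ)) := by
      rw [Real.rpow_mul (by norm_num : (0:ℝ) ≤ 2), Real.rpow_logb (by norm_num) (by norm_num) hq0,
        Real.rpow_natCast]
    have hnk : ((n - k : ℕ) : ℝ) = (n:ℝ) - (k:ℝ) := by
      rw [Nat.cast_sub hkn]
    have e1 : Real.logb 2 p = -L1 := by rw [hL1]; ring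
    have e2 : Real.logb 2 q = -L2 := by rw [hL2]; ring
    have hE : -(Real.logb 2 p * (k:ℝ) + Real.logb 2 q * ((n-k:ℕ):ℝ)) ≤ (binEnt p + ε) * n := by
      rw [e1, e2, hnk, hEnt]
      have h1 : L1 * (k:ℝ) ≤ L1 * (p * n) := mul_le_mul_of_nonneg_left hkle hL1pos.le
      have h2 : L2 * ((n:ℝ) - (k:ℝ)) ≤ L2 * (q * n + 2) :=
        mul_le_mul_of_nonneg_left (by rw [hq]; linarith) hL2pos.le
      nlinarith [h1, h2, hεn]
    calc (p ^ k * q ^ (n-k))⁻¹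
        = (2:ℝ) ^ (-(Real.logb 2 p * (k:ℝ) + Real.logb 2 q * ((n-k:ℕ):ℝ))) := by
          rw [Real.rpow_neg (by norm_num : (0:ℝ) ≤ 2), hpe, hqe,
            ← Real.rpow_add (by norm_num : (0:ℝ) < 2)]
      _ ≤ (2:ℝ) ^ ((binEnt p + ε) * n) := Real.rpow_le_rpow_of_exponent_le one_le_two hE
  have hSb : (S.card : ℝ) ≤ (2:ℝ) ^ ((binEnt p + ε) * n) := hcard.trans hinv
  have hkey : ∀ d : ℕ, (d:ℝ) ≤ (n:ℝ) - (binEnt p + ε) * n → 2 ^ d * S.card ≤ 2 ^ n := by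
    intro d hd
    have h2d : ((2:ℝ)) ^ (d:ℕ) ≤ (2:ℝ) ^ ((n:ℝ) - (binEnt p + ε) * n) := by
      rw [← Real.rpow_natCast 2 d]
      exact Real.rpow_le_rpow_of_exponent_le one_le_two hd
    have hreal : ((2:ℝ)) ^ (d:ℕ) * (S.card:ℝ) ≤ 2 ^ n := by
      calc ((2:ℝ))^(d:ℕ) * (S.card:ℝ)
          ≤ (2:ℝ)^((n:ℝ) - (binEnt p + ε)*n) * (2:ℝ)^((binEnt p + ε)*n) :=
            mul_le_mul h2d hSb (by positivity) (by positivity)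
        _ = (2:ℝ)^((n:ℝ)) := by
            rw [← Real.rpow_add (by norm_num : (0:ℝ) < 2)]
            congr 1
            ring
        _ = (2:ℝ) ^ (n:ℕ) := by rw [Real.rpow_natCast]
    exact_mod_cast hreal
  have hcount : 2 ^ ((n - mA) + (n - mB)) * S.card ≤ 2 ^ n := by
    by_cases hmA : mA ≤ n
    · by_cases hmB : mB ≤ n
      · apply hkey
        push_cast [Nat.cast_sub hmA, Nat.cast_sub hmB]
        linarith [hsum]
      · apply hkey
        rw [Nat.sub_eq_zero_of_le (le_of_not_ge hmB)]
        push_cast [Nat.cast_sub hmA]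
        linarith [hA]
    · by_cases hmB : mB ≤ n
      · apply hkey
        rw [Nat.sub_eq_zero_of_le (le_of_not_ge hmA)]
        push_cast [Nat.cast_sub hmB]
        linarith [hB]
      · rw [Nat.sub_eq_zero_of_le (le_of_not_ge hmA), Nat.sub_eq_zero_of_le (le_of_not_ge hmB)]
        have hcu : S.card ≤ 2 ^ n := by
          calc S.card ≤ Fintype.card (Fin n → ZMod 2) := Finset.card_le_univ S
            _ = 2 ^ n := by simp [Fintype.card_fun]
        simpa using hcu
  exact construct n mA mB T hcount
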